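/- Let χ be an invertible element of O(G)* with χ(1) = 1, and let J, L be Hopf 2-cocycles for G. Then χ : ₗO(G)ⱼ → ℂ is an algebra homomorphism if and only if L = J^χ := (χ ∘ m) * J * (χ⁻¹ ⊗ χ⁻¹), where ₗO(G)ⱼ is the vector space O(G) with multiplication a·b = Σ L⁻¹(a₁,b₁) a₂b₂ J(a₃,b₃). -/

import Mathlib

open TensorProduct

noncomputable section

/-- Convolution product of two `ℂ`-valued functionals on a `ℂ`-coalgebra. -/
def conv {C : Type} [AddCommGroup C] [Module ℂ C] [Coalgebra ℂ C]
    (f g : C →ₗ[ℂ] ℂ) : C →ₗ[ℂ] ℂ :=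
  LinearMap.mul' ℂ ℂ ∘ₗ TensorProduct.map f g ∘ₗ Coalgebra.comul

variable {H : Type} [CommRing H] [HopfAlgebra ℂ H]

/-- `a ⊗ b ⊗ c ↦ Σ J(a₁b₁ ⊗ c) J(a₂ ⊗ b₂)`. -/
def cocycleLHS (J : H ⊗[ℂ] H →ₗ[ℂ] ℂ) : (H ⊗[ℂ] H) ⊗[ℂ] H →ₗ[ℂ] ℂ :=
  conv (J ∘ₗ TensorProduct.map (LinearMap.mul' ℂ H) LinearMap.id)
    (LinearMap.mul' ℂ ℂ ∘ₗ TensorProduct.map J Coalgebra.counit)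

/-- `a ⊗ b ⊗ c ↦ Σ J(a ⊗ b₁c₁) J(b₂ ⊗ c₂)`. -/
def cocycleRHS (J : H ⊗[ℂ] H →ₗ[ℂ] ℂ) : (H ⊗[ℂ] H) ⊗[ℂ] H →ₗ[ℂ] ℂ :=
  conv (J ∘ₗ TensorProduct.map LinearMap.id (LinearMap.mul' ℂ H)
        ∘ₗ (TensorProduct.assoc ℂ H H H).toLinearMap)
    (LinearMap.mul' ℂ ℂ ∘ₗ TensorProduct.map Coalgebra.counit J
        ∘ₗ (TensorProduct.assoc ℂ H H H).toLinearMap)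

/-- A Hopf 2-cocycle for `H`: a convolution-invertible functional on `H ⊗ H` satisfying
`Σ J(a₁b₁, c) J(a₂, b₂) = Σ J(a, b₁c₁) J(b₂, c₂)` and `J(a,1) = ε(a) = J(1,a)`. -/
structure IsHopf2Cocycle (J : H ⊗[ℂ] H →ₗ[ℂ] ℂ) : Prop where
  invertible : ∃ J' : H ⊗[ℂ] H →ₗ[ℂ] ℂ,
    conv J J' = Coalgebra.counit ∧ conv J' J = Coalgebra.counit
  cocycle : cocycleLHS J = cocycleRHS J
  norm_right : ∀ a : H, J (a ⊗ₜ[ℂ] (1 : H)) = Coalgebra.counit a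
  norm_left : ∀ a : H, J ((1 : H) ⊗ₜ[ℂ] a) = Coalgebra.counit a


/-- The doubly twisted product of `ₗO(G)ⱼ` : `a ⊗ b ↦ Σ L⁻¹(a₁ ⊗ b₁) a₂b₂ J(a₃ ⊗ b₃)`. -/
def twP (φ ψ : H ⊗[ℂ] H →ₗ[ℂ] ℂ) : H ⊗[ℂ] H →ₗ[ℂ] H :=
  (TensorProduct.lid ℂ H).toLinearMap
    ∘ₗ TensorProduct.map φ
        ((TensorProduct.rid ℂ H).toLinearMap
          ∘ₗ TensorProduct.map (LinearMap.mul' ℂ H) ψ)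
    ∘ₗ TensorProduct.map LinearMap.id Coalgebra.comul
    ∘ₗ Coalgebra.comul


open Coalgebra in
lemma conv_repr {C : Type} [AddCommGroup C] [Module ℂ C] [Coalgebra ℂ C]
    (f g : C →ₗ[ℂ] ℂ) (a : C) {ι : Type} (r : Coalgebra.Repr ℂ a ι) :
    conv f g a = ∑ i ∈ r.index, f (r.left i) * g (r.right i) := by
  simp only [conv, LinearMap.comp_apply, ← r.eq, map_sum, TensorProduct.map_tmul,
    LinearMap.mul'_apply]

open Coalgebra in
lemma conv_counit_left {C : Type} [AddCommGroup C] [Module ℂ C] [Coalgebra ℂ C]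
    (f : C →ₗ[ℂ] ℂ) : conv Coalgebra.counit f = f := by
  apply LinearMap.ext; intro a
  rw [conv_repr _ _ a (ℛ ℂ a)]
  have := congrArg (LinearMap.mul' ℂ ℂ)
    (Coalgebra.sum_counit_tmul_map_eq f a (repr := ℛ ℂ a))
  simp only [map_sum, LinearMap.mul'_apply, one_mul] at this
  exact this

open Coalgebra in
lemma conv_counit_right {C : Type} [AddCommGroup C] [Module ℂ C] [Coalgebra ℂ C]
    (f : C →ₗ[ℂ] ℂ) : conv f Coalgebra.counit = f := by
  apply LinearMap.ext; intro a
  rw [conv_repr _ _ a (ℛ ℂ a)]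
  have := congrArg (LinearMap.mul' ℂ ℂ)
    (Coalgebra.sum_map_tmul_counit_eq f a (repr := ℛ ℂ a))
  simp only [map_sum, LinearMap.mul'_apply, mul_one] at this
  exact this

open Coalgebra in
lemma conv_assoc {C : Type} [AddCommGroup C] [Module ℂ C] [Coalgebra ℂ C]
    (f g h : C →ₗ[ℂ] ℂ) : conv (conv f g) h = conv f (conv g h) := by
  apply LinearMap.ext; intro a
  set r := ℛ ℂ a with hr
  have key := congrArg (LinearMap.mul' ℂ ℂ ∘ₗ LinearMap.lTensor ℂ (LinearMap.mul' ℂ ℂ))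
    (Coalgebra.sum_map_tmul_tmul_eq f g h a (repr := r)
      (a₁ := fun i => ℛ ℂ (r.left i)) (a₂ := fun i => ℛ ℂ (r.right i)))
  simp only [map_sum, LinearMap.comp_apply, LinearMap.lTensor_tmul,
    LinearMap.mul'_apply] at key
  rw [conv_repr _ _ a r, conv_repr _ _ a r]
  calc ∑ i ∈ r.index, conv f g (r.left i) * h (r.right i)
      = ∑ i ∈ r.index, ∑ j ∈ (ℛ ℂ (r.left i)).index,
          f ((ℛ ℂ (r.left i)).left j) * (g ((ℛ ℂ (r.left i)).right j) * h (r.right i)) := by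
        refine Finset.sum_congr rfl fun i _ => ?_
        rw [conv_repr _ _ _ (ℛ ℂ (r.left i)), Finset.sum_mul]
        simp_rw [mul_assoc]
    _ = ∑ i ∈ r.index, f (r.left i) * conv g h (r.right i) := by
        rw [← key]
        refine Finset.sum_congr rfl fun i _ => ?_
        rw [conv_repr _ _ _ (ℛ ℂ (r.right i)), Finset.mul_sum]

/-- A representation of `comul (a ⊗ₜ b)` built from representations of `comul a`, `comul b`. -/
def tmulRepr (a b : H) {ι κ : Type} (r : Coalgebra.Repr ℂ a ι) (s : Coalgebra.Repr ℂ b κ) :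
    Coalgebra.Repr ℂ (a ⊗ₜ[ℂ] b) (ι × κ) where
  index := r.index ×ˢ s.index
  left := fun p => r.left p.1 ⊗ₜ[ℂ] s.left p.2
  right := fun p => r.right p.1 ⊗ₜ[ℂ] s.right p.2
  eq := by
    have : Coalgebra.comul (R := ℂ) (a ⊗ₜ[ℂ] b)
        = TensorProduct.tensorTensorTensorComm ℂ H H H H
            (Coalgebra.comul a ⊗ₜ[ℂ] Coalgebra.comul b) := rfl
    rw [this, ← r.eq, ← s.eq]
    rw [TensorProduct.sum_tmul]
    simp only [TensorProduct.tmul_sum, map_sum, TensorProduct.tensorTensorTensorComm_tmul]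
    rw [Finset.sum_product]

open Coalgebra in
lemma conv_mul_map (f g f' g' : H →ₗ[ℂ] ℂ) :
    conv (LinearMap.mul' ℂ ℂ ∘ₗ TensorProduct.map f g)
      (LinearMap.mul' ℂ ℂ ∘ₗ TensorProduct.map f' g')
      = LinearMap.mul' ℂ ℂ ∘ₗ TensorProduct.map (conv f f') (conv g g') := by
  apply TensorProduct.ext'
  intro a b
  rw [conv_repr _ _ _ (tmulRepr a b (ℛ ℂ a) (ℛ ℂ b))]
  simp only [LinearMap.comp_apply, TensorProduct.map_tmul, LinearMap.mul'_apply]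
  rw [conv_repr _ _ a (ℛ ℂ a), conv_repr _ _ b (ℛ ℂ b), Finset.sum_mul_sum]
  rw [tmulRepr, Finset.sum_product]
  simp only [LinearMap.comp_apply, TensorProduct.map_tmul, LinearMap.mul'_apply]
  refine Finset.sum_congr rfl fun i _ => Finset.sum_congr rfl fun j _ => by ring

open Coalgebra in
lemma chi_twP (χ : H →ₗ[ℂ] ℂ) (φ ψ : H ⊗[ℂ] H →ₗ[ℂ] ℂ) :
    χ ∘ₗ twP φ ψ = conv φ (conv (χ ∘ₗ LinearMap.mul' ℂ H) ψ) := by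
  apply LinearMap.ext; intro c
  set r := ℛ ℂ c with hr
  rw [LinearMap.comp_apply, conv_repr _ _ c r]
  simp only [twP, LinearMap.comp_apply]
  rw [← r.eq]
  simp only [map_sum, TensorProduct.map_tmul, LinearMap.id_coe, id_eq,
    LinearEquiv.coe_coe, TensorProduct.lid_tmul, map_smul, smul_eq_mul]
  refine Finset.sum_congr rfl fun i _ => ?_
  rw [conv_repr _ _ _ (ℛ ℂ (r.right i)), ← (ℛ ℂ (r.right i)).eq]
  simp only [map_sum, TensorProduct.map_tmul, LinearEquiv.coe_coe,
    TensorProduct.rid_tmul, map_smul, smul_eq_mul, Finset.mul_sum, LinearMap.comp_apply]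
  exact Finset.sum_congr rfl fun j _ => by ring

/-- Let `χ` be a convolution-invertible functional on `H = O(G)` with `χ(1) = 1`, and
`J, L` Hopf 2-cocycles for `G` (`Linv` the convolution inverse of `L`).  Then
`χ : ₗO(G)ⱼ → ℂ` is an algebra homomorphism if and only if
`L = J^χ := (χ ∘ m) * J * (χ⁻¹ ⊗ χ⁻¹)`. -/
theorem character_of_twist_iff_gauge (J L Linv : H ⊗[ℂ] H →ₗ[ℂ] ℂ)
    (hJ : IsHopf2Cocycle J) (hL : IsHopf2Cocycle L)
    (hLinv : conv L Linv = Coalgebra.counit ∧ conv Linv L = Coalgebra.counit)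
    (χ χinv : H →ₗ[ℂ] ℂ)
    (hχ : conv χ χinv = Coalgebra.counit ∧ conv χinv χ = Coalgebra.counit)
    (hχ1 : χ (1 : H) = 1) :
    (∀ a b : H, χ (twP Linv J (a ⊗ₜ[ℂ] b)) = χ a * χ b)
    ↔ L = conv (conv (χ ∘ₗ LinearMap.mul' ℂ H) J)
          (LinearMap.mul' ℂ ℂ ∘ₗ TensorProduct.map χinv χinv) := by
  set A := χ ∘ₗ LinearMap.mul' ℂ H with hA
  set T := LinearMap.mul' ℂ ℂ ∘ₗ TensorProduct.map χ χ with hTdef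
  set Tinv := LinearMap.mul' ℂ ℂ ∘ₗ TensorProduct.map χinv χinv with hTinvdef
  have hcounit : (Coalgebra.counit : H ⊗[ℂ] H →ₗ[ℂ] ℂ)
      = LinearMap.mul' ℂ ℂ ∘ₗ TensorProduct.map Coalgebra.counit Coalgebra.counit :=
    TensorProduct.ext' fun a b => by simp [LinearMap.mul'_apply, mul_comm]
  have hT : conv T Tinv = Coalgebra.counit := by
    rw [hTdef, hTinvdef, conv_mul_map, hχ.1, hcounit]
  have hT' : conv Tinv T = Coalgebra.counit := by
    rw [hTdef, hTinvdef, conv_mul_map, hχ.2, hcounit]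
  have hcond : (∀ a b : H, χ (twP Linv J (a ⊗ₜ[ℂ] b)) = χ a * χ b)
      ↔ χ ∘ₗ twP Linv J = T := by
    constructor
    · intro h
      exact TensorProduct.ext' fun a b => by
        simpa [hTdef, LinearMap.mul'_apply] using h a b
    · intro h a b
      have := LinearMap.congr_fun h (a ⊗ₜ[ℂ] b)
      simpa [hTdef, LinearMap.mul'_apply] using this
  rw [hcond, chi_twP]
  constructor
  · intro h
    have h1 : conv A J = conv L T := by
      calc conv A J = conv Coalgebra.counit (conv A J) := (conv_counit_left _).symm
        _ = conv (conv L Linv) (conv A J) := by rw [hLinv.1]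
        _ = conv L (conv Linv (conv A J)) := conv_assoc _ _ _
        _ = conv L T := by rw [h]
    calc L = conv L Coalgebra.counit := (conv_counit_right L).symm
      _ = conv L (conv T Tinv) := by rw [hT]
      _ = conv (conv L T) Tinv := (conv_assoc _ _ _).symm
      _ = conv (conv A J) Tinv := by rw [← h1]
  · intro h
    have h1 : conv A J = conv L T := by
      calc conv A J = conv (conv A J) Coalgebra.counit := (conv_counit_right _).symm
        _ = conv (conv A J) (conv Tinv T) := by rw [hT']
        _ = conv (conv (conv A J) Tinv) T := (conv_assoc _ _ _).symm
        _ = conv L T := by rw [← h]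
    calc conv Linv (conv A J) = conv Linv (conv L T) := by rw [h1]
      _ = conv (conv Linv L) T := (conv_assoc _ _ _).symm
      _ = conv Coalgebra.counit T := by rw [hLinv.2]
      _ = T := conv_counit_left T
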